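/- Let k be an algebraically closed field of characteristic p > 0, let V be a finite-dimensional k-vector space and let F be a bijective Frobenius-semilinear endomorphism of V. Then the set V^{F=id} = {v ∈ V : F(v) = v} of fixed vectors is an 𝔽_p-subspace of V, and the natural k-linear map k ⊗_{𝔽_p} V^{F=id} → V, c ⊗ v ↦ c • v, is bijective; in particular dim_{𝔽_p} V^{F=id} = dim_k V and the fixed vectors span V over k. -/

import Mathlib

open Polynomial

section Aux

variable {p : ℕ} [Fact p.Prime] {k : Type*} [Field k] [CharP k p] [IsAlgClosed k]

lemma aux_exists_zmod [Algebra (ZMod p) k] {x : k} (hx : x ^ p = x) :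
    ∃ c : ZMod p, algebraMap (ZMod p) k c = x := by
  classical
  have hp : p.Prime := Fact.out
  have hp2 : 2 ≤ p := hp.two_le
  set P : k[X] := X ^ p - X with hP
  have hdlt : (X : k[X]).degree < (X ^ p : k[X]).degree := by
    rw [degree_X, degree_X_pow]
    exact_mod_cast (by omega : 1 < p)
  have hdP : P.degree = p := by
    rw [hP, degree_sub_eq_left_of_degree_lt hdlt, degree_X_pow]
  have hPne : P ≠ 0 := by
    intro h
    rw [h, degree_zero] at hdP
    exact absurd hdP.symm (by simp)
  have hroots : ∀ c : ZMod p, IsRoot P (algebraMap (ZMod p) k c) := by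
    intro c
    simp only [IsRoot, hP, eval_sub, eval_pow, eval_X]
    rw [← map_pow, ZMod.pow_card, sub_self]
  have hinj : Function.Injective (algebraMap (ZMod p) k) := (algebraMap (ZMod p) k).injective
  set img : Finset k := Finset.univ.image (algebraMap (ZMod p) k) with himg
  have hcard_img : img.card = p := by
    rw [himg, Finset.card_image_of_injective _ hinj, Finset.card_univ, ZMod.card]
  have hsub : img ⊆ P.roots.toFinset := by
    intro y hy
    rw [himg, Finset.mem_image] at hy
    obtain ⟨c, -, rfl⟩ := hy
    rw [Multiset.mem_toFinset, mem_roots hPne]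
    exact hroots c
  have hcard : P.roots.toFinset.card ≤ p := by
    refine le_trans (Multiset.toFinset_card_le _) ?_
    calc P.roots.card ≤ P.natDegree := card_roots' P
    _ = p := natDegree_eq_of_degree_eq_some hdP
  have heq : img = P.roots.toFinset :=
    Finset.eq_of_subset_of_card_le hsub (by rw [hcard_img]; exact hcard)
  have hxr : x ∈ P.roots.toFinset := by
    rw [Multiset.mem_toFinset, mem_roots hPne]
    simp [IsRoot, hP, hx]
  rw [← heq, himg, Finset.mem_image] at hxr
  obtain ⟨c, -, hc⟩ := hxr
  exact ⟨c, hc⟩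

lemma aux_AS (cx : k) : ∃ d : k, d ^ p - d = cx := by
  have hp : p.Prime := Fact.out
  have hdlt : (X : k[X]).degree < (X ^ p : k[X]).degree := by
    rw [degree_X, degree_X_pow]
    exact_mod_cast hp.one_lt
  have hd1 : ((X : k[X]) ^ p - X).degree = (p : WithBot ℕ) := by
    rw [degree_sub_eq_left_of_degree_lt hdlt, degree_X_pow]
  have hdlt2 : (C cx : k[X]).degree < ((X : k[X]) ^ p - X).degree := by
    rw [hd1]
    exact lt_of_le_of_lt degree_C_le (by exact_mod_cast hp.pos)
  have hdeg : ((X : k[X]) ^ p - X - C cx).degree = (p : WithBot ℕ) := by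
    rw [degree_sub_eq_left_of_degree_lt hdlt2, hd1]
  obtain ⟨d, hd⟩ := IsAlgClosed.exists_root ((X : k[X]) ^ p - X - C cx)
    (by rw [hdeg]; exact_mod_cast hp.ne_zero)
  refine ⟨d, ?_⟩
  have h2 := hd
  simp only [IsRoot, eval_sub, eval_pow, eval_X, eval_C] at h2
  have := sub_eq_zero.mp h2
  exact this

lemma aux_indep [Algebra (ZMod p) k] {V : Type*} [AddCommGroup V] [Module k V]
    [Module (ZMod p) V] [IsScalarTower (ZMod p) k V]
    (F : V → V)
    (hFadd : ∀ x y : V, F (x + y) = F x + F y)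
    (hFsmul : ∀ (c : k) (v : V), F (c • v) = c ^ p • F v)
    {ι : Type*} (f : ι → V) (hf : ∀ i, F (f i) = f i)
    (hli : LinearIndependent (ZMod p) f) : LinearIndependent k f := by
  classical
  let F' : V →+ V := AddMonoidHom.mk' F hFadd
  have hF'app : ∀ v, F' v = F v := fun _ => rfl
  rw [linearIndependent_iff']
  intro s
  induction s using Finset.strongInduction with
  | _ s ih =>
    intro g hg i hi
    by_contra hgi
    set h : ι → k := fun j => g j / g i with hh
    have hhi : h i = 1 := div_self hgi
    have hsum : ∑ j ∈ s, h j • f j = 0 := by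
      have h2 : ∑ j ∈ s, h j • f j = (g i)⁻¹ • ∑ j ∈ s, g j • f j := by
        rw [Finset.smul_sum]
        refine Finset.sum_congr rfl fun j _ => ?_
        rw [hh]
        simp only []
        rw [div_eq_inv_mul, mul_smul]
      rw [h2, hg, smul_zero]
    have hFsum : ∑ j ∈ s, (h j ^ p) • f j = 0 := by
      have h0 : F (∑ j ∈ s, h j • f j) = ∑ j ∈ s, (h j ^ p) • f j := by
        rw [← hF'app, map_sum]
        refine Finset.sum_congr rfl fun j _ => ?_
        rw [hF'app, hFsmul, hf]
      rw [hsum, ← hF'app, map_zero] at h0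
      exact h0.symm
    have hall : ∑ j ∈ s, (h j ^ p - h j) • f j = 0 := by
      simp only [sub_smul]
      rw [Finset.sum_sub_distrib, hFsum, hsum, sub_zero]
    have hsub : ∑ j ∈ s.erase i, (h j ^ p - h j) • f j = 0 := by
      rw [Finset.sum_erase _ (by rw [hhi, one_pow, sub_self, zero_smul])]
      exact hall
    have hfix : ∀ j ∈ s, h j ^ p = h j := by
      intro j hj
      rcases eq_or_ne j i with rfl | hji
      · rw [hhi, one_pow]
      · have := ih (s.erase i) (Finset.erase_ssubset hi) _ hsub j
          (Finset.mem_erase.2 ⟨hji, hj⟩)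
        exact sub_eq_zero.mp this
    have hchoice : ∀ j ∈ s, ∃ c : ZMod p, algebraMap (ZMod p) k c = h j :=
      fun j hj => aux_exists_zmod (hfix j hj)
    choose! c hc using hchoice
    have hcs : ∑ j ∈ s, c j • f j = 0 := by
      have h3 : ∀ j ∈ s, c j • f j = h j • f j := fun j hj => by
        rw [← hc j hj, algebraMap_smul]
      rw [Finset.sum_congr rfl h3, hsum]
    have hci := linearIndependent_iff'.mp hli s c hcs i hi
    have h1 : (1 : k) = 0 := by
      rw [← hhi, ← hc i hi, hci, map_zero]
    exact one_ne_zero h1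

end Aux
noncomputable def dpoly (p : ℕ) {k : Type*} [Field k] (a : ℕ → k) : ℕ → Polynomial k
  | 0 => Polynomial.C (a 0) * Polynomial.X ^ p
  | (i + 1) => dpoly p a i ^ p + Polynomial.C (a (i + 1)) * Polynomial.X ^ p

section Aux2

open Polynomial

variable {p : ℕ} [Fact p.Prime] {k : Type*} [Field k] [CharP k p] [IsAlgClosed k]

lemma dpoly_facts {a : ℕ → k} (ha : a 0 ≠ 0) (i : ℕ) :
    dpoly p a i ≠ 0 ∧ (dpoly p a i).natDegree = p ^ (i + 1) := by
  have hp : p.Prime := Fact.out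
  induction i with
  | zero =>
    constructor
    · rw [dpoly]
      exact mul_ne_zero (by simpa using ha) (pow_ne_zero _ X_ne_zero)
    · rw [dpoly, natDegree_C_mul_X_pow p (a 0) ha, pow_one]
  | succ i ihi =>
    obtain ⟨hne, hdeg⟩ := ihi
    have hAne : dpoly p a i ^ p ≠ 0 := pow_ne_zero _ hne
    have hA : (dpoly p a i ^ p).natDegree = p ^ (i + 2) := by
      rw [natDegree_pow, hdeg, ← pow_succ']
    have hBlt : (C (a (i + 1)) * X ^ p).natDegree < (dpoly p a i ^ p).natDegree := by
      rw [hA]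
      calc (C (a (i + 1)) * X ^ p).natDegree ≤ p := natDegree_C_mul_X_pow_le _ _
      _ < p ^ (i + 2) := by
        conv_lhs => rw [← pow_one p]
        exact Nat.pow_lt_pow_right hp.one_lt (by omega)
    have hBlt2 : (C (a (i + 1)) * X ^ p).natDegree < p ^ (i + 2) := hA ▸ hBlt
    have hco : (dpoly p a (i + 1)).coeff (p ^ (i + 2)) ≠ 0 := by
      rw [dpoly, coeff_add, coeff_eq_zero_of_natDegree_lt hBlt2, add_zero, ← hA,
        coeff_natDegree]
      exact leadingCoeff_ne_zero.mpr hAne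
    constructor
    · intro h0
      rw [h0, coeff_zero] at hco
      exact hco rfl
    · rw [dpoly, natDegree_add_eq_left_of_natDegree_lt hBlt, hA]

lemma dpoly_derivative (a : ℕ → k) (i : ℕ) : derivative (dpoly p a i) = 0 := by
  induction i with
  | zero =>
    rw [dpoly]
    simp [derivative_X_pow, CharP.cast_eq_zero k p]
  | succ i ihi =>
    rw [dpoly]
    simp [derivative_pow, ihi, derivative_X_pow, CharP.cast_eq_zero k p]

lemma dpoly_eval_zero (a : ℕ → k) (i : ℕ) : (dpoly p a i).eval 0 = 0 := by
  have hp : p.Prime := Fact.out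
  induction i with
  | zero => rw [dpoly]; simp [zero_pow hp.ne_zero]
  | succ i ihi => rw [dpoly]; simp [ihi, zero_pow hp.ne_zero]

lemma dpoly_eval_zero' (a : ℕ → k) (t : k) :
    (dpoly p a 0).eval t = a 0 * t ^ p := by rw [dpoly]; simp

lemma dpoly_eval_succ (a : ℕ → k) (t : k) (i : ℕ) :
    (dpoly p a (i + 1)).eval t = (dpoly p a i).eval t ^ p + a (i + 1) * t ^ p := by
  rw [dpoly]; simp

end Aux2
section Aux3

open Polynomial

variable {p : ℕ} [Fact p.Prime] {k : Type*} [Field k] [CharP k p] [IsAlgClosed k]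

lemma aux_exists_fixed {V : Type*} [AddCommGroup V] [Module k V] [FiniteDimensional k V]
    (G : V → V) (hGinj : Function.Injective G)
    (hadd : ∀ x y : V, G (x + y) = G x + G y)
    (hsmul : ∀ (c : k) (v : V), G (c • v) = c ^ p • G v)
    {v : V} (hv : v ≠ 0) : ∃ w : V, w ≠ 0 ∧ G w = w := by
  classical
  have hp : p.Prime := Fact.out
  have hppos : 0 < p := hp.pos
  let G' : V →+ V := AddMonoidHom.mk' G hadd
  have hG'app : ∀ u, G' u = G u := fun _ => rfl
  set vs : ℕ → V := fun i => G^[i] v with hvs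
  have hvs0 : vs 0 = v := rfl
  have hvssucc : ∀ i, vs (i + 1) = G (vs i) := fun i => Function.iterate_succ_apply' G i v
  set Wm : ℕ → Submodule k V := fun m => Submodule.span k (vs '' Set.Iio m) with hWm
  have hWmono : ∀ {m l : ℕ}, m ≤ l → Wm m ≤ Wm l := fun h =>
    Submodule.span_mono (Set.image_mono fun x hx => lt_of_lt_of_le hx h)
  have hmem : ∀ {i m : ℕ}, i < m → vs i ∈ Wm m := fun hil =>
    Submodule.subset_span ⟨_, hil, rfl⟩
  have hex : ∃ m, vs m ∈ Wm m := by
    by_contra hno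
    push_neg at hno
    have key : ∀ m, m ≤ Module.finrank k (Wm m) := by
      intro m
      induction m with
      | zero => exact Nat.zero_le _
      | succ m ihm =>
        have hlt : Wm m < Wm (m + 1) :=
          lt_of_le_of_ne (hWmono (Nat.le_succ m))
            (fun h => hno m (h ▸ hmem (Nat.lt_succ_self m)))
        have := Submodule.finrank_lt_finrank_of_lt hlt
        omega
    have h1 := key (Module.finrank k V + 1)
    have h2 : Module.finrank k (Wm (Module.finrank k V + 1)) ≤ Module.finrank k V :=
      Submodule.finrank_le _
    omega
  obtain ⟨n, hnmem, hmin⟩ : ∃ n, vs n ∈ Wm n ∧ ∀ m, m < n → vs m ∉ Wm m :=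
    ⟨Nat.find hex, Nat.find_spec hex, fun m hm => Nat.find_min hex hm⟩
  have hn1 : 1 ≤ n := by
    by_contra h0
    have hn0 : n = 0 := by omega
    rw [hn0] at hnmem
    have hempty : vs '' Set.Iio (0 : ℕ) = ∅ := by
      ext x; simp
    rw [hWm] at hnmem
    simp only [hempty, Submodule.span_empty, Submodule.mem_bot] at hnmem
    exact hv (by rwa [hvs0] at hnmem)
  -- coefficients
  obtain ⟨a, hvn⟩ : ∃ a : ℕ → k, vs n = ∑ i ∈ Finset.range n, a i • vs i := by
    have himg : vs '' Set.Iio n = Set.range (fun i : Fin n => vs i) := by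
      ext x
      constructor
      · rintro ⟨j, hj, rfl⟩; exact ⟨⟨j, hj⟩, rfl⟩
      · rintro ⟨i, rfl⟩; exact ⟨i, i.isLt, rfl⟩
    rw [hWm] at hnmem
    simp only [himg] at hnmem
    obtain ⟨aF, haF⟩ := (Submodule.mem_span_range_iff_exists_fun k).mp hnmem
    refine ⟨fun i => if h : i < n then aF ⟨i, h⟩ else 0, ?_⟩
    rw [← haF, ← Fin.sum_univ_eq_sum_range (fun i => (if h : i < n then aF ⟨i, h⟩ else 0) • vs i) n]
    refine Finset.sum_congr rfl fun i _ => ?_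
    simp [i.isLt]
  have ha0 : a 0 ≠ 0 := by
    intro h0
    obtain ⟨m, hm⟩ : ∃ m, n = m + 1 := ⟨n - 1, by omega⟩
    rw [hm, Finset.sum_range_succ'] at hvn
    rw [h0, zero_smul, add_zero] at hvn
    choose b hb using fun i : ℕ => IsAlgClosed.exists_pow_nat_eq (k := k) (a (i + 1)) hppos
    have hGsum : G (∑ i ∈ Finset.range m, b i • vs i)
        = ∑ i ∈ Finset.range m, a (i + 1) • vs (i + 1) := by
      rw [← hG'app, map_sum]
      refine Finset.sum_congr rfl fun i _ => ?_
      rw [hG'app, hsmul, hb, hvssucc]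
    have hGeq : G (vs m) = G (∑ i ∈ Finset.range m, b i • vs i) := by
      rw [hGsum, ← hvssucc, ← hm, hm, hvn]
    have heq := hGinj hGeq
    have hmemm : vs m ∈ Wm m := by
      rw [heq]
      exact Submodule.sum_mem _ fun i hi =>
        Submodule.smul_mem _ _ (hmem (Finset.mem_range.mp hi))
    exact hmin m (by omega) hmemm
  -- polynomial root
  obtain ⟨hDne, hDdeg⟩ := dpoly_facts (p := p) ha0 (n - 1)
  have hDdeg' : (dpoly p a (n - 1)).natDegree = p ^ n := by
    rw [hDdeg]; congr 1; omega
  set Q : k[X] := dpoly p a (n - 1) - X with hQ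
  have hpn2 : 2 ≤ p ^ n := by
    calc 2 ≤ p := hp.two_le
    _ = p ^ 1 := (pow_one p).symm
    _ ≤ p ^ n := Nat.pow_le_pow_right hp.pos hn1
  have hXlt : (X : k[X]).natDegree < (dpoly p a (n - 1)).natDegree := by
    rw [natDegree_X, hDdeg']; omega
  have hQdeg : Q.natDegree = p ^ n := by
    rw [hQ, sub_eq_add_neg, natDegree_add_eq_left_of_natDegree_lt (by rwa [natDegree_neg]),
      hDdeg']
  have hQne : Q ≠ 0 := by
    intro h
    rw [h, natDegree_zero] at hQdeg
    omega
  have hQderiv : derivative Q = -1 := by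
    rw [hQ, derivative_sub, dpoly_derivative, derivative_X, zero_sub]
  have hQroot0 : Q.IsRoot 0 := by
    simp [hQ, IsRoot, dpoly_eval_zero (p := p) a]
  have hdvd : (X : k[X]) ∣ Q := by
    have h2 := (dvd_iff_isRoot (p := Q) (a := 0)).mpr hQroot0
    simpa using h2
  obtain ⟨R, hR⟩ := hdvd
  have hRne : R ≠ 0 := by
    intro h; rw [h, mul_zero] at hR; exact hQne hR
  have hRdeg : 0 < R.natDegree := by
    have := hQdeg
    rw [hR, natDegree_mul X_ne_zero hRne, natDegree_X] at this
    omega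
  obtain ⟨t, ht⟩ := IsAlgClosed.exists_root R (by
    have h4 : (0 : WithBot ℕ) < R.degree := natDegree_pos_iff_degree_pos.mp hRdeg
    exact ne_of_gt h4)
  have hR0 : R.eval 0 = -1 := by
    have h2 : derivative Q = R + X * derivative R := by
      rw [hR, derivative_mul, derivative_X, one_mul]
    rw [hQderiv] at h2
    have h3 := congrArg (eval 0) h2
    simp only [eval_add, eval_mul, eval_X, zero_mul, add_zero, eval_neg, eval_one] at h3
    exact h3.symm
  have htne : t ≠ 0 := by
    intro h
    rw [h] at ht
    rw [IsRoot] at ht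
    rw [ht] at hR0
    exact one_ne_zero (neg_eq_zero.mp hR0.symm)
  have hQt : Q.eval t = 0 := by
    rw [IsRoot] at ht
    rw [hR, eval_mul, ht, mul_zero]
  have hdt : (dpoly p a (n - 1)).eval t = t := by
    rw [hQ, eval_sub, eval_X] at hQt
    exact sub_eq_zero.mp hQt
  -- the fixed vector
  set c : ℕ → k := fun i => (dpoly p a i).eval t with hc
  have hc0 : c 0 = a 0 * t ^ p := dpoly_eval_zero' a t
  have hcsucc : ∀ i, c (i + 1) = c i ^ p + a (i + 1) * t ^ p := fun i => dpoly_eval_succ a t i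
  obtain ⟨m, hm⟩ : ∃ m, n = m + 1 := ⟨n - 1, by omega⟩
  have hcm : c m = t := by
    rw [hc]
    simp only []
    rw [show m = n - 1 by omega, hdt]
  set w : V := ∑ i ∈ Finset.range n, c i • vs i with hw
  have hwne : w ≠ 0 := by
    intro h0
    rw [hw, hm, Finset.sum_range_succ] at h0
    have hS : (∑ i ∈ Finset.range m, c i • vs i) ∈ Wm m :=
      Submodule.sum_mem _ fun i hi =>
        Submodule.smul_mem _ _ (hmem (Finset.mem_range.mp hi))
    have h1 : c m • vs m = -(∑ i ∈ Finset.range m, c i • vs i) :=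
      eq_neg_of_add_eq_zero_right h0
    have hcmne : c m ≠ 0 := by rw [hcm]; exact htne
    have h2 : vs m = (c m)⁻¹ • -(∑ i ∈ Finset.range m, c i • vs i) := by
      rw [← h1, smul_smul, inv_mul_cancel₀ hcmne, one_smul]
    have hmemm : vs m ∈ Wm m := by
      rw [h2]
      exact Submodule.smul_mem _ _ (Submodule.neg_mem _ hS)
    exact hmin m (by omega) hmemm
  have hGw : G w = w := by
    have h1 : G w = ∑ i ∈ Finset.range n, (c i ^ p) • vs (i + 1) := by
      rw [hw, ← hG'app, map_sum]
      refine Finset.sum_congr rfl fun i _ => ?_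
      rw [hG'app, hsmul, hvssucc]
    rw [h1, hw, hm, Finset.sum_range_succ, Finset.sum_range_succ'
      (fun i => c i • vs i) m]
    have hvn' : vs (m + 1) = ∑ i ∈ Finset.range (m + 1), a i • vs i := by
      rw [← hm]; exact hvn
    rw [hvn', hcm, Finset.smul_sum, Finset.sum_range_succ'
      (fun i => (t ^ p) • (a i • vs i)) m, ← add_assoc, ← Finset.sum_add_distrib]
    congr 1
    · refine Finset.sum_congr rfl fun i _ => ?_
      rw [hcsucc i, add_smul, smul_smul, mul_comm (t ^ p) (a (i + 1))]
    · rw [hc0, smul_smul, mul_comm (t ^ p) (a 0)]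
  exact ⟨w, hwne, hGw⟩

end Aux3
section Aux4

open Polynomial

variable {p : ℕ} [Fact p.Prime] {k : Type*} [Field k] [CharP k p] [IsAlgClosed k]

lemma aux_span_top {V : Type*} [AddCommGroup V] [Module k V] [FiniteDimensional k V]
    (F : V → V) (hFbij : Function.Bijective F)
    (hFadd : ∀ x y : V, F (x + y) = F x + F y)
    (hFsmul : ∀ (c : k) (v : V), F (c • v) = c ^ p • F v) :
    Submodule.span k {v : V | F v = v} = ⊤ := by
  classical
  have hp : p.Prime := Fact.out
  have hppos : 0 < p := hp.pos
  by_contra hne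
  set Sset : Set V := {v | F v = v} with hSset
  set W : Submodule k V := Submodule.span k Sset with hW
  have hWlt : W < ⊤ := lt_top_iff_ne_top.mpr hne
  let F' : V →+ V := AddMonoidHom.mk' F hFadd
  have hF'app : ∀ u, F' u = F u := fun _ => rfl
  have hWrep : ∀ w ∈ W, ∃ cc : V →₀ k, ↑cc.support ⊆ Sset ∧
      (cc.sum fun mi r => r • mi) = w := fun w hw => Submodule.mem_span_set.mp hw
  -- F maps W onto W
  have hFW : ∀ w ∈ W, ∃ u ∈ W, F u = w := by
    intro w hw
    obtain ⟨cc, hsupp, hsum⟩ := hWrep w hw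
    choose b hb using fun x : V => IsAlgClosed.exists_pow_nat_eq (k := k) (cc x) hppos
    refine ⟨∑ x ∈ cc.support, b x • x, ?_, ?_⟩
    · exact Submodule.sum_mem _ fun x hx =>
        Submodule.smul_mem _ _ (Submodule.subset_span (hsupp hx))
    · rw [← hF'app, map_sum, ← hsum, Finsupp.sum]
      refine Finset.sum_congr rfl fun x hx => ?_
      rw [hF'app, hFsmul, hb, (hsupp hx : F x = x)]
  -- F - id maps W onto W
  have hFid : ∀ w ∈ W, ∃ u ∈ W, F u - u = w := by
    intro w hw
    obtain ⟨cc, hsupp, hsum⟩ := hWrep w hw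
    choose b hb using fun x : V => aux_AS (p := p) (cc x)
    refine ⟨∑ x ∈ cc.support, b x • x, ?_, ?_⟩
    · exact Submodule.sum_mem _ fun x hx =>
        Submodule.smul_mem _ _ (Submodule.subset_span (hsupp hx))
    · rw [← hF'app, map_sum, ← Finset.sum_sub_distrib, ← hsum, Finsupp.sum]
      refine Finset.sum_congr rfl fun x hx => ?_
      rw [hF'app, hFsmul, (hsupp hx : F x = x), ← sub_smul, hb]
  -- F as a semilinear map
  let Flin : V →ₛₗ[frobenius k p] V :=
    { toFun := F
      map_add' := hFadd
      map_smul' := fun c v => by show F (c • v) = _; rw [hFsmul]; rfl }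
  have hFlinapp : ∀ u, Flin u = F u := fun _ => rfl
  have hFWsub : W ≤ Submodule.comap Flin W := by
    intro u hu
    obtain ⟨cc, hsupp, hsum⟩ := hWrep u hu
    simp only [Submodule.mem_comap, hFlinapp]
    rw [← hsum, Finsupp.sum, ← hF'app, map_sum]
    refine Submodule.sum_mem _ fun x hx => ?_
    rw [hF'app, hFsmul, (hsupp hx : F x = x)]
    exact Submodule.smul_mem _ _ (Submodule.subset_span (hsupp hx))
  -- quotient
  let Fq := Submodule.mapQ W W Flin hFWsub
  have hFqmk : ∀ u : V, Fq (Submodule.Quotient.mk u) = Submodule.Quotient.mk (F u) :=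
    fun u => rfl
  have : Nontrivial (V ⧸ W) := Submodule.Quotient.nontrivial_iff.mpr (ne_of_lt hWlt)
  obtain ⟨x0, hx0⟩ := exists_ne (0 : V ⧸ W)
  have hFqinj : Function.Injective Fq := by
    rw [← LinearMap.ker_eq_bot]  -- ker of semilinear?
    rw [Submodule.eq_bot_iff]
    intro x hx
    obtain ⟨u, rfl⟩ := Submodule.Quotient.mk_surjective W x
    rw [LinearMap.mem_ker, hFqmk, Submodule.Quotient.mk_eq_zero] at hx
    obtain ⟨u', hu'W, hu'⟩ := hFW _ hx
    have : u = u' := hFbij.injective hu'.symm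
    rw [Submodule.Quotient.mk_eq_zero, this]
    exact hu'W
  have hFqadd : ∀ x y : V ⧸ W, Fq (x + y) = Fq x + Fq y := fun x y => map_add Fq x y
  have hFqsmul : ∀ (c : k) (x : V ⧸ W), Fq (c • x) = c ^ p • Fq x := fun c x => by
    rw [map_smulₛₗ, frobenius_def]
  obtain ⟨wq, hwqne, hwqfix⟩ := aux_exists_fixed (p := p) Fq hFqinj hFqadd hFqsmul hx0
  obtain ⟨v, rfl⟩ := Submodule.Quotient.mk_surjective W wq
  have hvnW : v ∉ W := fun h => hwqne (by rwa [Submodule.Quotient.mk_eq_zero])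
  have hFvW : F v - v ∈ W := by
    rw [hFqmk] at hwqfix
    exact (Submodule.Quotient.eq W).mp hwqfix
  obtain ⟨u, huW, hu⟩ := hFid _ (Submodule.neg_mem _ hFvW)
  have hfix : F (v + u) = v + u := by
    rw [hFadd]
    have : F u = u + (-(F v - v)) := by rw [← hu]; abel
    rw [this]; abel
  have : v + u ∈ W := Submodule.subset_span (hfix : v + u ∈ Sset)
  have hvW : v ∈ W := by
    have h2 : v = (v + u) - u := by abel
    rw [h2]
    exact Submodule.sub_mem _ this huW
  exact hvnW hvW

end Aux4
open scoped TensorProduct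

/-- Let `k` be an algebraically closed field of characteristic `p > 0`,
`V` a finite-dimensional `k`-vector space and `F` a bijective Frobenius-semilinear
endomorphism of `V`.  Then the fixed points `V^{F=id}` form an `𝔽_p = ZMod p`-subspace `S`
of `V`, the natural `k`-linear map `k ⊗_{𝔽_p} S → V`, `c ⊗ v ↦ c • v`, is bijective;
in particular `dim_{𝔽_p} S = dim_k V` and the fixed vectors span `V` over `k`. -/
theorem stmt_3 (p : ℕ) [Fact p.Prime] (k : Type*) [Field k] [CharP k p] [IsAlgClosed k]
    [Algebra (ZMod p) k]
    (V : Type*) [AddCommGroup V] [Module k V] [FiniteDimensional k V]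
    [Module (ZMod p) V] [IsScalarTower (ZMod p) k V]
    (F : V → V) (hFbij : Function.Bijective F)
    (hFadd : ∀ x y : V, F (x + y) = F x + F y)
    (hFsmul : ∀ (c : k) (v : V), F (c • v) = c ^ p • F v) :
    ∃ S : Submodule (ZMod p) V,
      (S : Set V) = {v : V | F v = v} ∧
      (∃ g : k ⊗[ZMod p] S →ₗ[k] V,
        (∀ (c : k) (w : S), g (c ⊗ₜ[ZMod p] w) = c • (w : V)) ∧ Function.Bijective g) ∧
      Module.finrank (ZMod p) S = Module.finrank k V ∧
      Submodule.span k {v : V | F v = v} = ⊤ := by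
  classical
  have hF0 : F 0 = 0 := by
    have h := hFadd 0 0
    rw [add_zero] at h
    exact (left_eq_add.mp h)
  have hsmulZ : ∀ (c : ZMod p) (v : V), F v = v → F (c • v) = c • v := by
    intro c v hv
    have h1 : c • v = (algebraMap (ZMod p) k c) • v := (algebraMap_smul k c v).symm
    rw [h1, hFsmul, ← map_pow, ZMod.pow_card, hv]
  have hspan : Submodule.span k {v : V | F v = v} = ⊤ :=
    aux_span_top (p := p) F hFbij hFadd hFsmul
  let S : Submodule (ZMod p) V :=
    { carrier := {v : V | F v = v}
      add_mem' := fun {x} {y} hx hy => by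
        simp only [Set.mem_setOf_eq] at *
        rw [hFadd, hx, hy]
      zero_mem' := hF0
      smul_mem' := fun c v hv => hsmulZ c v hv }
  let bS := Module.Basis.ofVectorSpace (ZMod p) S
  let fb : Module.Basis.ofVectorSpaceIndex (ZMod p) S → V := fun i => (bS i : V)
  have hfbZ : LinearIndependent (ZMod p) fb :=
    bS.linearIndependent.map' S.subtype (Submodule.ker_subtype S)
  have hfbk : LinearIndependent k fb :=
    aux_indep (p := p) F hFadd hFsmul fb (fun i => (bS i).2) hfbZ
  have hfinite : Finite (Module.Basis.ofVectorSpaceIndex (ZMod p) S) := hfbk.finite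
  have hfintype : Fintype (Module.Basis.ofVectorSpaceIndex (ZMod p) S) := Fintype.ofFinite _
  have hsub : {v : V | F v = v} ⊆ ↑(Submodule.span k (Set.range fb)) := by
    intro v hv
    have hx : (⟨v, hv⟩ : S) ∈ Submodule.span (ZMod p) (Set.range ⇑bS) := by
      rw [bS.span_eq]; trivial
    have h2 : v ∈ Submodule.map S.subtype (Submodule.span (ZMod p) (Set.range ⇑bS)) :=
      ⟨⟨v, hv⟩, hx, rfl⟩
    rw [Submodule.map_span, ← Set.range_comp] at h2
    have h3 : v ∈ Submodule.span (ZMod p) (Set.range fb) := h2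
    have h4 : Submodule.span (ZMod p) (Set.range fb) ≤
        (Submodule.span k (Set.range fb)).restrictScalars (ZMod p) :=
      Submodule.span_le.mpr fun z hz => Submodule.subset_span hz
    exact h4 h3
  have htop : ⊤ ≤ Submodule.span k (Set.range fb) := by
    rw [← hspan]
    exact Submodule.span_le.mpr hsub
  let bV : Module.Basis (Module.Basis.ofVectorSpaceIndex (ZMod p) S) k V := Module.Basis.mk hfbk htop
  let g : k ⊗[ZMod p] S →ₗ[k] V := LinearMap.liftBaseChange k S.subtype
  have hg : ∀ (c : k) (w : S), g (c ⊗ₜ[ZMod p] w) = c • (w : V) := fun c w =>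
    LinearMap.liftBaseChange_tmul _ _ _ _
  have hgb : g = ((bS.baseChange k).equiv bV (Equiv.refl _)).toLinearMap :=
    Module.Basis.ext (bS.baseChange k) fun i => by
      rw [LinearEquiv.coe_coe, Module.Basis.equiv_apply, Equiv.refl_apply, Module.Basis.mk_apply,
        Module.Basis.baseChange_apply, hg, one_smul]
  refine ⟨S, rfl, ⟨g, hg, ?_⟩, ?_, hspan⟩
  · rw [hgb]
    exact ((bS.baseChange k).equiv bV (Equiv.refl _)).bijective
  · rw [Module.finrank_eq_card_basis bS, Module.finrank_eq_card_basis bV]
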